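/- Let d ≥ 1. The truncation to total degree ≤ d of the formal power series ∏_{j=1}^r ξ_j/(1 - exp(-ξ_j)) in Q[[ξ_1,…,ξ_r]] has all coefficients in Z[1/(d+1)!]. -/

import Mathlib

/-- `q` lies in `ℤ[1/N]`. -/
def PDen (N : ℕ) (q : ℚ) : Prop := ∃ (k : ℕ) (z : ℤ), q * (N : ℚ) ^ k = z

lemma PDen.intCast (N : ℕ) (z : ℤ) : PDen N (z : ℚ) := ⟨0, z, by simp⟩

lemma PDen.natCast (N n : ℕ) : PDen N (n : ℚ) := ⟨0, n, by simp⟩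

lemma PDen.one (N : ℕ) : PDen N 1 := ⟨0, 1, by simp⟩

lemma PDen.add {N : ℕ} {a b : ℚ} (ha : PDen N a) (hb : PDen N b) : PDen N (a + b) := by
  obtain ⟨k1, z1, h1⟩ := ha
  obtain ⟨k2, z2, h2⟩ := hb
  refine ⟨k1 + k2, z1 * N ^ k2 + z2 * N ^ k1, ?_⟩
  push_cast
  rw [pow_add]
  linear_combination (N : ℚ) ^ k2 * h1 + (N : ℚ) ^ k1 * h2

lemma PDen.mul {N : ℕ} {a b : ℚ} (ha : PDen N a) (hb : PDen N b) : PDen N (a * b) := by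
  obtain ⟨k1, z1, h1⟩ := ha
  obtain ⟨k2, z2, h2⟩ := hb
  refine ⟨k1 + k2, z1 * z2, ?_⟩
  push_cast
  rw [pow_add]
  linear_combination (b * (N : ℚ) ^ k2) * h1 + (z1 : ℚ) * h2

lemma PDen.neg {N : ℕ} {a : ℚ} (ha : PDen N a) : PDen N (-a) := by
  obtain ⟨k, z, h⟩ := ha
  exact ⟨k, -z, by push_cast; linear_combination -h⟩

lemma PDen.sub {N : ℕ} {a b : ℚ} (ha : PDen N a) (hb : PDen N b) : PDen N (a - b) := by
  rw [sub_eq_add_neg]; exact ha.add hb.neg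

lemma PDen.sum {N : ℕ} {ι : Type*} (s : Finset ι) (f : ι → ℚ)
    (h : ∀ i ∈ s, PDen N (f i)) : PDen N (∑ i ∈ s, f i) := by
  classical
  induction s using Finset.induction_on with
  | empty => simpa using PDen.intCast N 0
  | insert x s hx ih =>
    rw [Finset.sum_insert hx]
    exact (h _ (Finset.mem_insert_self _ _)).add
      (ih fun i hi => h i (Finset.mem_insert_of_mem hi))

lemma PDen.prod {N : ℕ} {ι : Type*} (s : Finset ι) (f : ι → ℚ)
    (h : ∀ i ∈ s, PDen N (f i)) : PDen N (∏ i ∈ s, f i) := by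
  classical
  induction s using Finset.induction_on with
  | empty => simpa using PDen.one N
  | insert x s hx ih =>
    rw [Finset.prod_insert hx]
    exact (h _ (Finset.mem_insert_self _ _)).mul
      (ih fun i hi => h i (Finset.mem_insert_of_mem hi))

lemma PDen.of_dvd {M N : ℕ} {a : ℚ} (hMN : M ∣ N) (ha : PDen M a) : PDen N a := by
  obtain ⟨t, rfl⟩ := hMN
  obtain ⟨k, z, h⟩ := ha
  refine ⟨k, z * t ^ k, ?_⟩
  push_cast
  rw [mul_pow, ← mul_assoc, h]

lemma PDen.inv_of_dvd {c N : ℕ} (hc : c ≠ 0) (h : c ∣ N) : PDen N ((c : ℚ)⁻¹) := by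
  have h2 : ((N / c : ℕ) : ℚ) = (N : ℚ) / c := Nat.cast_div h (by exact_mod_cast hc)
  exact ⟨1, ((N / c : ℕ) : ℤ), by rw [pow_one, inv_mul_eq_div, Int.cast_natCast, h2]⟩

lemma PDen.bernoulli' (n : ℕ) : PDen (n + 1).factorial (bernoulli' n) := by
  induction n using Nat.strong_induction_on with
  | _ n ih =>
    rw [bernoulli'_def]
    refine (PDen.one _).sub (PDen.sum _ _ fun k hk => ?_)
    have hkn : k < n := Finset.mem_range.mp hk
    have hcast : ((n : ℚ) - k + 1) = ((n - k + 1 : ℕ) : ℚ) := by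
      push_cast [hkn.le]; ring
    rw [div_eq_mul_inv, hcast]
    refine ((PDen.natCast _ _).mul (PDen.inv_of_dvd (by omega) ?_)).mul
      ((ih k hkn).of_dvd (Nat.factorial_dvd_factorial (by omega)))
    exact Nat.dvd_factorial (by omega) (by omega)

theorem coeff_prod_todd_denominator (d r : ℕ) (hd : 1 ≤ d)
    (F : MvPowerSeries (Fin r) ℚ)
    (hF : ∀ m : Fin r →₀ ℕ, MvPowerSeries.coeff m F =
      ∏ j : Fin r, bernoulli' (m j) / (m j).factorial)
    (m : Fin r →₀ ℕ) (hm : (m.sum fun _ n => n) ≤ d) :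
    ∃ (k : ℕ) (z : ℤ),
      MvPowerSeries.coeff m F * ((d + 1).factorial : ℚ) ^ k = z := by
  rw [hF]
  have key : PDen (d + 1).factorial (∏ j : Fin r, bernoulli' (m j) / (m j).factorial) := by
    refine PDen.prod _ _ fun j _ => ?_
    have hle : m j ≤ d := by
      refine le_trans ?_ hm
      by_cases hj : j ∈ m.support
      · exact Finset.single_le_sum (f := fun i => m i) (fun _ _ => Nat.zero_le _) hj
      · simp [Finsupp.notMem_support_iff.mp hj]
    rw [div_eq_mul_inv]
    refine ((PDen.bernoulli' (m j)).of_dvd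
      (Nat.factorial_dvd_factorial (by omega))).mul ?_
    exact_mod_cast PDen.inv_of_dvd (Nat.factorial_ne_zero _)
      (Nat.factorial_dvd_factorial (by omega))
  exact key
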